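/- Let q > 0, let p ≥ 0 be a real number, and let n be a natural number with n < q. Then ∫_{(p+1)^(-1/q)}^∞ q·y^(-q-1)·(y - (p+1)^(-1/q))^n·(1 - y^(-q)/(p+1))^p dy = (p+1)^(1-n/q) · Σ_{k=0}^{n} binomial(n,k)·(-1)^k·B(1 - (n-k)/q, p+1), where B(a,b) = Γ(a)Γ(b)/Γ(a+b). -/

import Mathlib

open MeasureTheory Real

/-- The Beta function expressed via the Gamma function. -/
noncomputable def betaFn (a b : ℝ) : ℝ := Real.Gamma a * Real.Gamma b / Real.Gamma (a + b)

open Set in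
lemma beta_ofReal {a b : ℝ} (ha : 0 < a) (hb : 0 < b) :
    Complex.betaIntegral a b = ((∫ t in Ioo (0:ℝ) 1, t ^ (a-1) * (1-t) ^ (b-1)) : ℝ) := by
  rw [Complex.betaIntegral, intervalIntegral.integral_of_le zero_le_one,
    MeasureTheory.integral_Ioc_eq_integral_Ioo]
  refine Eq.trans ?_ (integral_ofReal (𝕜 := ℂ))
  refine setIntegral_congr_fun measurableSet_Ioo (fun t ht => ?_)
  have h0 : ((t ^ (a-1) * (1-t) ^ (b-1) : ℝ) : ℂ) = ↑t ^ ((a:ℂ)-1) * (1-(t:ℂ)) ^ ((b:ℂ)-1) := by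
    rw [Complex.ofReal_mul, Complex.ofReal_cpow ht.1.le,
      Complex.ofReal_cpow (by linarith [ht.2] : (0:ℝ) ≤ 1 - t)]
    push_cast
    ring
  exact h0.symm

open Set in
lemma betaIntegrable {a b : ℝ} (ha : 0 < a) (hb : 0 < b) :
    IntegrableOn (fun t : ℝ => t ^ (a-1) * (1-t) ^ (b-1)) (Ioo 0 1) := by
  have h := Complex.betaIntegral_convergent (u := a) (v := b) (by simpa) (by simpa)
  rw [intervalIntegrable_iff_integrableOn_Ioo_of_le zero_le_one] at h
  have h2 : IntegrableOn (fun t : ℝ => ((t ^ (a-1) * (1-t) ^ (b-1) : ℝ) : ℂ)) (Ioo 0 1) := by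
    refine h.congr_fun (fun t ht => ?_) measurableSet_Ioo
    rw [Complex.ofReal_mul, Complex.ofReal_cpow ht.1.le,
      Complex.ofReal_cpow (by linarith [ht.2] : (0:ℝ) ≤ 1 - t)]
    push_cast
    ring
  have := h2.re
  simp at this
  exact this

open Set in
lemma betaIntegral_real {a b : ℝ} (ha : 0 < a) (hb : 0 < b) :
    ∫ t in Ioo (0:ℝ) 1, t ^ (a-1) * (1-t) ^ (b-1) = betaFn a b := by
  have hG : Real.Gamma (a + b) ≠ 0 := (Real.Gamma_pos_of_pos (by linarith)).ne'
  have key := Complex.Gamma_mul_Gamma_eq_betaIntegral (s := (a:ℂ)) (t := (b:ℂ))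
    (by simpa) (by simpa)
  rw [beta_ofReal ha hb] at key
  have h3 : ((a:ℂ) + b) = ((a+b : ℝ) : ℂ) := by push_cast; ring
  rw [h3, Complex.Gamma_ofReal, Complex.Gamma_ofReal, Complex.Gamma_ofReal] at key
  have key2 : Real.Gamma a * Real.Gamma b
      = Real.Gamma (a+b) * ∫ t in Ioo (0:ℝ) 1, t ^ (a-1) * (1-t) ^ (b-1) := by
    exact_mod_cast key
  rw [betaFn]
  field_simp
  linarith [key2]

open Set in
lemma subst_rpow {q : ℝ} (hq : 0 < q) (g : ℝ → ℝ) :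
    ∫ t in Ioo (0:ℝ) 1, g t = ∫ z in Ioi (1:ℝ), q * z ^ (-q-1) * g (z ^ (-q)) := by
  have himg : (fun z : ℝ => z ^ (-q)) '' Ioi 1 = Ioo 0 1 := by
    ext t
    constructor
    · rintro ⟨z, hz, rfl⟩
      rw [mem_Ioi] at hz
      exact ⟨rpow_pos_of_pos (by linarith) _,
        rpow_lt_one_of_one_lt_of_neg hz (by linarith)⟩
    · rintro ⟨ht0, ht1⟩
      refine ⟨t ^ (-q⁻¹), ?_, ?_⟩
      · rw [mem_Ioi, one_lt_rpow_iff_of_pos ht0]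
        right
        exact ⟨ht1, by simp [hq]⟩
      · show (t ^ (-q⁻¹)) ^ (-q) = t
        rw [← rpow_mul ht0.le, neg_mul_neg, inv_mul_cancel₀ hq.ne', rpow_one]
  have hderiv : ∀ z ∈ Ioi (1:ℝ), HasDerivWithinAt (fun z : ℝ => z ^ (-q))
      (-q * z ^ (-q-1)) (Ioi 1) z := by
    intro z hz
    rw [mem_Ioi] at hz
    have := Real.hasDerivAt_rpow_const (x := z) (p := -q) (Or.inl (by linarith))
    exact this.hasDerivWithinAt
  have hinj : InjOn (fun z : ℝ => z ^ (-q)) (Ioi 1) := by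
    refine (Real.rpow_left_injOn (neg_ne_zero.mpr hq.ne')).mono ?_
    intro z hz
    exact le_of_lt (lt_trans zero_lt_one (show (1:ℝ) < z from hz))
  have key := integral_image_eq_integral_abs_deriv_smul measurableSet_Ioi hderiv hinj g
  rw [himg] at key
  rw [key]
  refine setIntegral_congr_fun measurableSet_Ioi (fun z hz => ?_)
  rw [mem_Ioi] at hz
  have hzpos : (0:ℝ) < z := by linarith
  have h1 : (0:ℝ) < q * z ^ (-q-1) := by positivity
  rw [abs_of_neg (show -q * z ^ (-q-1) < 0 by linarith)]
  simp only [smul_eq_mul]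
  ring

/-- The integral `I(p,1,q)` arising in the moments of the IF3 distribution. -/
theorem if3_moment_integral (q p : ℝ) (n : ℕ) (hq : 0 < q) (hp : 0 ≤ p)
    (hn : (n : ℝ) < q) :
    ∫ y in Set.Ioi ((p + 1) ^ (-1 / q)),
        q * y ^ (-q - 1) * (y - (p + 1) ^ (-1 / q)) ^ n * (1 - y ^ (-q) / (p + 1)) ^ p =
      (p + 1) ^ (1 - (n : ℝ) / q) *
        ∑ k ∈ Finset.range (n + 1),
          (n.choose k : ℝ) * (-1) ^ k * betaFn (1 - ((n : ℝ) - k) / q) (p + 1) := by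
  have hp1 : (0:ℝ) < p + 1 := by linarith
  set c : ℝ := (p + 1) ^ (-1 / q) with hc_def
  have hc : 0 < c := rpow_pos_of_pos hp1 _
  have hcq : c ^ (-q) = p + 1 := by
    rw [hc_def, ← rpow_mul hp1.le]
    rw [show (-1 / q) * (-q) = 1 by field_simp]
    exact rpow_one _
  set F : ℝ → ℝ := fun y => q * y ^ (-q - 1) * (y - c) ^ n * (1 - y ^ (-q) / (p + 1)) ^ p
    with hF_def
  -- Step A : scaling y = c z
  have hA := MeasureTheory.integral_comp_mul_left_Ioi F 1 hc
  rw [mul_one] at hA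
  have hA' : (∫ y in Set.Ioi c, F y) = c * ∫ z in Set.Ioi (1:ℝ), F (c * z) := by
    rw [hA, smul_eq_mul, ← mul_assoc, mul_inv_cancel₀ hc.ne', one_mul]
  -- Step B : simplify the scaled integrand
  set B : ℝ := ∫ z in Set.Ioi (1:ℝ), q * z ^ (-q-1) * (z - 1) ^ n * (1 - z ^ (-q)) ^ p
    with hB_def
  have hB' : (∫ z in Set.Ioi (1:ℝ), F (c * z))
      = c ^ ((n:ℝ) - q - 1) * B := by
    rw [hB_def, ← integral_const_mul]
    refine setIntegral_congr_fun measurableSet_Ioi (fun z hz => ?_)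
    rw [Set.mem_Ioi] at hz
    have hz0 : (0:ℝ) < z := by linarith
    have h1 : (c * z) ^ (-q - 1) = c ^ (-q-1) * z ^ (-q-1) :=
      mul_rpow hc.le hz0.le
    have h2 : (c * z - c) ^ n = c ^ (n:ℕ) * (z - 1) ^ n := by
      rw [← mul_pow]
      ring_nf
    have h3 : (c * z) ^ (-q) = (p + 1) * z ^ (-q) := by
      rw [mul_rpow hc.le hz0.le, hcq]
    have h4 : 1 - (c * z) ^ (-q) / (p + 1) = 1 - z ^ (-q) := by
      rw [h3, mul_div_assoc]
      have h4' : (p + 1) * (z ^ (-q) / (p + 1)) = z ^ (-q) := by field_simp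
      rw [h4']
    have h5 : c ^ ((n:ℝ) - q - 1) = c ^ (-q-1) * c ^ (n:ℕ) := by
      rw [← rpow_natCast c n, ← rpow_add hc]
      ring_nf
    rw [hF_def]
    simp only
    rw [h1, h2, h4, h5]
    ring
  -- Step C : substitution t = z ^ (-q)
  set g : ℝ → ℝ := fun t => (t ^ (-1/q) - 1) ^ n * (1 - t) ^ p with hg_def
  have hC : B = ∫ t in Set.Ioo (0:ℝ) 1, g t := by
    rw [subst_rpow hq g, hB_def]
    refine setIntegral_congr_fun measurableSet_Ioi (fun z hz => ?_)
    rw [Set.mem_Ioi] at hz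
    have hz0 : (0:ℝ) < z := by linarith
    have h6 : (z ^ (-q)) ^ (-1/q) = z := by
      rw [← rpow_mul hz0.le, show (-q) * (-1/q) = 1 by field_simp, rpow_one]
    rw [hg_def]
    simp only
    rw [h6]
    ring
  -- Step D : binomial expansion and beta integrals
  have hak : ∀ k ∈ Finset.range (n+1), (0:ℝ) < 1 - ((n:ℝ) - k) / q := by
    intro k hk
    rw [Finset.mem_range] at hk
    have h7 : ((n:ℝ) - k) / q < 1 := by
      rw [div_lt_one hq]
      have : (0:ℝ) ≤ (k:ℝ) := Nat.cast_nonneg k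
      linarith
    linarith
  have hD : (∫ t in Set.Ioo (0:ℝ) 1, g t)
      = ∑ k ∈ Finset.range (n+1), (n.choose k : ℝ) * (-1)^k *
          betaFn (1 - ((n:ℝ) - k) / q) (p + 1) := by
    have hexp : ∀ t ∈ Set.Ioo (0:ℝ) 1, g t
        = ∑ k ∈ Finset.range (n+1), (n.choose k : ℝ) * (-1)^k *
            (t ^ ((1 - ((n:ℝ) - k) / q) - 1) * (1 - t) ^ ((p + 1) - 1)) := by
      intro t ht
      have ht0 := ht.1
      rw [hg_def]
      simp only
      have hbin : (t ^ (-1/q) - 1) ^ n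
          = ∑ k ∈ Finset.range (n+1), (-1:ℝ)^k * (t ^ (-1/q)) ^ (n - k) * n.choose k := by
        have := add_pow (-1 : ℝ) (t ^ (-1/q)) n
        rw [show (-1 : ℝ) + t ^ (-1/q) = t ^ (-1/q) - 1 by ring] at this
        rw [this]
      rw [hbin, Finset.sum_mul]
      refine Finset.sum_congr rfl (fun k hk => ?_)
      rw [Finset.mem_range] at hk
      have hkn : k ≤ n := by omega
      have h8 : (t ^ (-1/q)) ^ (n - k) = t ^ ((1 - ((n:ℝ) - k) / q) - 1) := by
        rw [← rpow_natCast (t ^ (-1/q)) (n - k), ← rpow_mul ht0.le]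
        congr 1
        rw [Nat.cast_sub hkn]
        field_simp
        ring
      rw [h8, show (p + 1) - 1 = p by ring]
      ring
    rw [setIntegral_congr_fun measurableSet_Ioo hexp]
    rw [MeasureTheory.integral_finset_sum]
    · refine Finset.sum_congr rfl (fun k hk => ?_)
      rw [integral_const_mul, betaIntegral_real (hak k hk) hp1]
    · intro k hk
      exact ((betaIntegrable (hak k hk) hp1).const_mul _)
  -- Assemble
  have hconst : c * c ^ ((n:ℝ) - q - 1) = (p + 1) ^ (1 - (n:ℝ)/q) := by
    have h9 : c * c ^ ((n:ℝ) - q - 1) = c ^ ((n:ℝ) - q) := by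
      nth_rewrite 1 [← rpow_one c]
      rw [← rpow_add hc]
      ring_nf
    rw [h9, hc_def, ← rpow_mul hp1.le]
    congr 1
    field_simp
    ring
  calc ∫ y in Set.Ioi c, F y = c * (c ^ ((n:ℝ) - q - 1) * B) := by rw [hA', hB']
    _ = (c * c ^ ((n:ℝ) - q - 1)) * B := by ring
    _ = (p + 1) ^ (1 - (n:ℝ)/q) * B := by rw [hconst]
    _ = _ := by rw [hC, hD]
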